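/- Let 1 ≤ d ≤ n, let S ∈ V(n,d), and let L ⊆ Sⁿ be a linear subspace. Then there exists a nonzero Ω ∈ L with ΩS = 0 if and only if π_L(T_S) is a proper subspace of L, where T_S = {X ∈ Sⁿ : Xv ∈ range(S) for all v ∈ ker(S)} (i.e., if and only if the restriction of π_L to V(n,d) is not a submersion at S). -/

import Mathlib

open Matrix

private lemma trace_sq_zero' {n : ℕ} {A : Matrix (Fin n) (Fin n) ℝ} (hA : A.IsSymm)
    (h : (A * A).trace = 0) : A = 0 := by
  have hsum : ∑ i, ∑ j, (A i j) ^ 2 = 0 := by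
    rw [← h]
    simp only [Matrix.trace, Matrix.diag, Matrix.mul_apply]
    refine Finset.sum_congr rfl fun i _ => Finset.sum_congr rfl fun j _ => ?_
    have h2 : A j i = A i j := by
      conv_lhs => rw [← hA.eq]
      rw [Matrix.transpose_apply]
    rw [sq, h2]
  ext i j
  have h1 := (Finset.sum_eq_zero_iff_of_nonneg
    (fun i _ => Finset.sum_nonneg fun j _ => sq_nonneg (A i j))).mp hsum i (Finset.mem_univ i)
  have h2 := (Finset.sum_eq_zero_iff_of_nonneg
    (fun j _ => sq_nonneg (A i j))).mp h1 j (Finset.mem_univ j)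
  simpa using pow_eq_zero_iff (n := 2) (by norm_num) |>.mp h2

private lemma exists_proj' (n : ℕ) (S : Matrix (Fin n) (Fin n) ℝ) (hS : S.IsSymm) :
    ∃ Q Sp : Matrix (Fin n) (Fin n) ℝ, Q.IsSymm ∧ Q * Q = Q ∧ Q * S = 0 ∧ S * Q = 0 ∧
      Sp * S = 1 - Q ∧ S * Sp = 1 - Q := by
  have hH : S.IsHermitian := by rwa [Matrix.IsHermitian, conjTranspose_eq_transpose_of_trivial]
  set U : Matrix (Fin n) (Fin n) ℝ := (hH.eigenvectorUnitary : Matrix (Fin n) (Fin n) ℝ) with hU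
  have hUU : star U * U = 1 := by simp [hU]
  set lam : Fin n → ℝ := hH.eigenvalues with hlam
  have hSpec : S = U * diagonal lam * star U := by
    simpa [hU, hlam] using hH.spectral_theorem
  set d' : Fin n → ℝ := fun i => if lam i = 0 then 1 else 0 with hd'
  set dp : Fin n → ℝ := fun i => if lam i = 0 then 0 else (lam i)⁻¹ with hdp
  have key : ∀ a b : Fin n → ℝ, (U * diagonal a * star U) * (U * diagonal b * star U)
      = U * diagonal (a * b) * star U := fun a b => by
    simp only [Matrix.mul_assoc]
    rw [show star U * (U * (diagonal b * star U)) = diagonal b * star U by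
        rw [← Matrix.mul_assoc, hUU, Matrix.one_mul],
      show diagonal a * (diagonal b * star U) = diagonal (a * b) * star U by
        rw [← Matrix.mul_assoc, diagonal_mul_diagonal]; rfl]
  have hdiag : ∀ a b : Fin n → ℝ, a = b → U * diagonal a * star U = U * diagonal b * star U := by
    rintro a b rfl; rfl
  have hsub : ∀ a b : Fin n → ℝ, U * diagonal a * star U - U * diagonal b * star U
      = U * diagonal (a - b) * star U := fun a b => by
    rw [← Matrix.sub_mul, ← Matrix.mul_sub, Matrix.diagonal_sub]; rfl
  have hone : U * diagonal (fun _ => (1:ℝ)) * star U = 1 := by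
    simp [diagonal_one, hU]
  have hQS : (U * diagonal d' * star U) * S = 0 := by
    rw [hSpec, key]
    have h0 : d' * lam = fun _ => 0 := by
      funext i; by_cases h : lam i = 0 <;> simp [hd', h, Pi.mul_apply]
    rw [h0, Matrix.diagonal_zero, Matrix.mul_zero, Matrix.zero_mul]
  have hSQ : S * (U * diagonal d' * star U) = 0 := by
    rw [hSpec, key]
    have h0 : lam * d' = fun _ => 0 := by
      funext i; by_cases h : lam i = 0 <;> simp [hd', h, Pi.mul_apply]
    rw [h0, Matrix.diagonal_zero, Matrix.mul_zero, Matrix.zero_mul]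
  refine ⟨U * diagonal d' * star U, U * diagonal dp * star U, ?_, ?_, hQS, hSQ, ?_, ?_⟩
  · have h1 : (U * diagonal d' * star U)ᴴ = U * diagonal d' * star U := by
      simp [conjTranspose_mul, diagonal_conjTranspose, Matrix.mul_assoc,
        Matrix.star_eq_conjTranspose, conjTranspose_eq_transpose_of_trivial]
    rwa [conjTranspose_eq_transpose_of_trivial] at h1
  · rw [key]
    apply hdiag
    funext i; by_cases h : lam i = 0 <;> simp [hd', h, Pi.mul_apply]
  · rw [hSpec, key, ← hone, hsub]
    apply hdiag
    funext i; by_cases h : lam i = 0 <;>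
      simp [hd', hdp, h, Pi.mul_apply, Pi.sub_apply, inv_mul_cancel₀]
  · rw [hSpec, key, ← hone, hsub]
    apply hdiag
    funext i; by_cases h : lam i = 0 <;>
      simp [hd', hdp, h, Pi.mul_apply, Pi.sub_apply, mul_inv_cancel₀]

private noncomputable def matEquiv' (n : ℕ) :
    Matrix (Fin n) (Fin n) ℝ ≃ₗ[ℝ] EuclideanSpace ℝ (Fin n × Fin n) :=
  (LinearEquiv.curry ℝ ℝ (Fin n) (Fin n)).symm ≪≫ₗ (WithLp.linearEquiv 2 ℝ _).symm

private lemma matEquiv'_inner (n : ℕ) (A B : Matrix (Fin n) (Fin n) ℝ) (hB : B.IsSymm) :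
    (inner ℝ (matEquiv' n A) (matEquiv' n B) : ℝ) = (A * B).trace := by
  have hB' : ∀ i j, B j i = B i j := fun i j => by
    conv_lhs => rw [← hB.eq]
    rfl
  simp only [matEquiv', LinearEquiv.trans_apply, PiLp.inner_apply, RCLike.inner_apply,
    starRingEnd_apply, star_trivial, Matrix.trace, Matrix.diag, Matrix.mul_apply]
  rw [Fintype.sum_prod_type]
  exact Finset.sum_congr rfl fun i _ => Finset.sum_congr rfl fun j _ => by
    simp [WithLp.linearEquiv, LinearEquiv.curry, hB' i j]; exact mul_comm _ _

private lemma exists_orth' {E : Type*} [NormedAddCommGroup E] [InnerProductSpace ℝ E]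
    [FiniteDimensional ℝ E] {K₁ K₂ : Submodule ℝ E} (h : K₁ ≤ K₂) (hne : K₁ ≠ K₂) :
    ∃ v, v ∈ K₂ ∧ v ≠ 0 ∧ ∀ u ∈ K₁, (inner ℝ u v : ℝ) = 0 := by
  have hlt : K₁ < K₂ := lt_of_le_of_ne h hne
  have hdim := Submodule.finrank_add_inf_finrank_orthogonal h
  have h2 : Module.finrank ℝ K₁ < Module.finrank ℝ K₂ := Submodule.finrank_lt_finrank_of_lt hlt
  have hpos : (K₁ᗮ ⊓ K₂ : Submodule ℝ E) ≠ ⊥ := by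
    intro hbot
    rw [hbot, finrank_bot] at hdim
    omega
  obtain ⟨v, hv, hv0⟩ := Submodule.exists_mem_ne_zero_of_ne_bot hpos
  exact ⟨v, hv.2, hv0, fun u hu => (Submodule.mem_orthogonal _ _).mp hv.1 u hu⟩

theorem stmt10 (n d : ℕ) (hd1 : 1 ≤ d) (hdn : d ≤ n)
    (S : Matrix (Fin n) (Fin n) ℝ) (hS : S.IsSymm) (hrank : S.rank = d)
    (L : Submodule ℝ (Matrix (Fin n) (Fin n) ℝ)) (hLsymm : ∀ A ∈ L, A.IsSymm)
    (piL : Matrix (Fin n) (Fin n) ℝ → Matrix (Fin n) (Fin n) ℝ)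
    (hlin : IsLinearMap ℝ piL)
    (hproj : ∀ X : Matrix (Fin n) (Fin n) ℝ,
      piL X ∈ L ∧ ∀ B ∈ L, ((X - piL X) * B).trace = 0) :
    (∃ Ω ∈ L, Ω ≠ 0 ∧ Ω * S = 0) ↔
      ∃ Y ∈ L, Y ∉ piL '' {X : Matrix (Fin n) (Fin n) ℝ | X.IsSymm ∧
        ∀ v : Fin n → ℝ, S.mulVec v = 0 → ∃ w : Fin n → ℝ, S.mulVec w = X.mulVec v} := by
  classical
  obtain ⟨Q, Sp, hQsymm, hQQ, hQS, hSQ, hSpS, hSSp⟩ := exists_proj' n S hS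
  constructor
  · rintro ⟨Ω, hΩL, hΩne, hΩS⟩
    refine ⟨Ω, hΩL, ?_⟩
    rintro ⟨X, ⟨hXsymm, hXker⟩, hXeq⟩
    have hΩsymm : Ω.IsSymm := hLsymm Ω hΩL
    have hSΩ : S * Ω = 0 := by
      have h1 := congrArg Matrix.transpose hΩS
      rwa [Matrix.transpose_mul, hS.eq, hΩsymm.eq, Matrix.transpose_zero] at h1
    have hQΩ : Q * Ω = Ω := by
      have h1 : (1 - Q) * Ω = 0 := by rw [← hSpS, Matrix.mul_assoc, hSΩ, Matrix.mul_zero]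
      rw [Matrix.sub_mul, Matrix.one_mul, sub_eq_zero] at h1
      exact h1.symm
    have hΩQ : Ω * Q = Ω := by
      have h1 : Ω * (1 - Q) = 0 := by rw [← hSSp, ← Matrix.mul_assoc, hΩS, Matrix.zero_mul]
      rw [Matrix.mul_sub, Matrix.mul_one, sub_eq_zero] at h1
      exact h1.symm
    have hQXQ : Q * X * Q = 0 := by
      have h1 : ∀ v, (Q * X * Q).mulVec v = 0 := by
        intro v
        have hv : S.mulVec (Q.mulVec v) = 0 := by
          rw [Matrix.mulVec_mulVec, hSQ, Matrix.zero_mulVec]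
        obtain ⟨w, hw⟩ := hXker _ hv
        have h2 : (Q * X * Q).mulVec v = Q.mulVec (X.mulVec (Q.mulVec v)) := by
          rw [Matrix.mulVec_mulVec, Matrix.mulVec_mulVec]
        rw [h2, ← hw, Matrix.mulVec_mulVec, hQS, Matrix.zero_mulVec]
      ext i j
      have h3 := congrFun (h1 (Pi.single j 1)) i
      simpa [Matrix.mulVec_single] using h3
    have htrX : (X * Ω).trace = 0 := by
      have hΩ2 : Q * Ω * Q = Ω := by rw [hQΩ, hΩQ]
      have e1 : X * Ω = (X * Q * Ω) * Q := by
        conv_lhs => rw [← hΩ2]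
        noncomm_ring
      rw [e1, Matrix.trace_mul_comm,
        show Q * (X * Q * Ω) = (Q * X * Q) * Ω by noncomm_ring,
        hQXQ, Matrix.zero_mul, Matrix.trace_zero]
    have hp := (hproj X).2 Ω hΩL
    rw [Matrix.sub_mul, Matrix.trace_sub, hXeq, htrX] at hp
    have htrΩ : (Ω * Ω).trace = 0 := by linarith
    exact hΩne (trace_sq_zero' hΩsymm htrΩ)
  · rintro ⟨Y, hYL, hYnot⟩
    set T : Set (Matrix (Fin n) (Fin n) ℝ) := {X : Matrix (Fin n) (Fin n) ℝ | X.IsSymm ∧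
      ∀ v : Fin n → ℝ, S.mulVec v = 0 → ∃ w : Fin n → ℝ, S.mulVec w = X.mulVec v} with hT
    let Tsub : Submodule ℝ (Matrix (Fin n) (Fin n) ℝ) :=
      { carrier := T
        add_mem' := fun {a b} ha hb => by
          refine ⟨ha.1.add hb.1, fun v hv => ?_⟩
          obtain ⟨w1, hw1⟩ := ha.2 v hv
          obtain ⟨w2, hw2⟩ := hb.2 v hv
          exact ⟨w1 + w2, by rw [Matrix.mulVec_add, Matrix.add_mulVec, hw1, hw2]⟩
        zero_mem' := ⟨Matrix.isSymm_zero, fun v _ => ⟨0, by simp⟩⟩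
        smul_mem' := fun c a ha => by
          refine ⟨ha.1.smul c, fun v hv => ?_⟩
          obtain ⟨w, hw⟩ := ha.2 v hv
          exact ⟨c • w, by rw [Matrix.mulVec_smul, Matrix.smul_mulVec, hw]⟩ }
    let f : Matrix (Fin n) (Fin n) ℝ →ₗ[ℝ] Matrix (Fin n) (Fin n) ℝ := IsLinearMap.mk' piL hlin
    let M : Submodule ℝ (Matrix (Fin n) (Fin n) ℝ) := Tsub.map f
    have hML : M ≤ L := by rintro _ ⟨X, hX, rfl⟩; exact (hproj X).1
    have hMne : M ≠ L := by
      intro hEq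
      exact hYnot (by obtain ⟨X, hX, hXe⟩ := hEq ▸ hYL; exact ⟨X, hX, hXe⟩)
    set M' : Submodule ℝ (EuclideanSpace ℝ (Fin n × Fin n)) :=
      M.map (matEquiv' n : Matrix (Fin n) (Fin n) ℝ →ₗ[ℝ] EuclideanSpace ℝ (Fin n × Fin n))
      with hM'
    set L' : Submodule ℝ (EuclideanSpace ℝ (Fin n × Fin n)) :=
      L.map (matEquiv' n : Matrix (Fin n) (Fin n) ℝ →ₗ[ℝ] EuclideanSpace ℝ (Fin n × Fin n))
      with hL'
    have hM'L' : M' ≤ L' := Submodule.map_mono hML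
    have hne' : M' ≠ L' := fun h =>
      hMne (Submodule.map_injective_of_injective (matEquiv' n).injective h)
    obtain ⟨v, hvL', hv0, hvorth⟩ := exists_orth' hM'L' hne'
    obtain ⟨Ω, hΩL, hΩe⟩ := hvL'
    have hΩsymm : Ω.IsSymm := hLsymm Ω hΩL
    have hΩne : Ω ≠ 0 := by
      intro h0
      apply hv0
      rw [← hΩe, h0, map_zero]
    refine ⟨Ω, hΩL, hΩne, ?_⟩
    have htrT : ∀ X ∈ T, (X * Ω).trace = 0 := by
      intro X hX
      have h2 : ((piL X) * Ω).trace = 0 := by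
        have h3 : (inner ℝ (matEquiv' n (piL X)) (matEquiv' n Ω) : ℝ) = 0 := by
          have h4 := hvorth (matEquiv' n (piL X)) ⟨piL X, ⟨X, hX, rfl⟩, rfl⟩
          rw [← hΩe] at h4
          exact h4
        rwa [matEquiv'_inner n _ _ hΩsymm] at h3
      have hp := (hproj X).2 Ω hΩL
      rw [Matrix.sub_mul, Matrix.trace_sub] at hp
      linarith
    set A := Ω - Q * Ω * Q with hA
    have hQv : ∀ u : Fin n → ℝ, S.mulVec u = 0 → Q.mulVec u = u := by
      intro u hu
      have h1 : (1 - Q).mulVec u = 0 := by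
        rw [← hSpS, ← Matrix.mulVec_mulVec, hu, Matrix.mulVec_zero]
      rw [Matrix.sub_mulVec, Matrix.one_mulVec, sub_eq_zero] at h1
      exact h1.symm
    have hAsymm : A.IsSymm := by
      show Aᵀ = A
      rw [hA]
      simp [Matrix.transpose_sub, Matrix.transpose_mul, hQsymm.eq, hΩsymm.eq, Matrix.mul_assoc]
    have hAT : A ∈ T := by
      refine ⟨hAsymm, fun u hu => ?_⟩
      refine ⟨Sp.mulVec (Ω.mulVec u), ?_⟩
      have hQuu := hQv u hu
      rw [Matrix.mulVec_mulVec, hSSp, Matrix.sub_mulVec, Matrix.one_mulVec, hA,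
        Matrix.sub_mulVec]
      congr 1
      calc Q.mulVec (Ω.mulVec u) = (Q * Ω).mulVec u := Matrix.mulVec_mulVec u Q Ω
        _ = (Q * Ω).mulVec (Q.mulVec u) := by rw [hQuu]
        _ = (Q * Ω * Q).mulVec u := Matrix.mulVec_mulVec u (Q * Ω) Q
    have htrA : (A * Ω).trace = 0 := htrT A hAT
    have hQAQ : Q * A * Q = 0 := by
      rw [hA]
      have h1 : Q * (Ω - Q * Ω * Q) * Q = Q * Ω * Q - Q * (Q * Ω * Q) * Q := by noncomm_ring
      have h2 : Q * (Q * Ω * Q) * Q = Q * Ω * Q := by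
        calc Q * (Q * Ω * Q) * Q = (Q * Q) * Ω * (Q * Q) := by noncomm_ring
          _ = Q * Ω * Q := by rw [hQQ]
      rw [h1, h2, sub_self]
    have htrAQ : (A * (Q * Ω * Q)).trace = 0 := by
      calc (A * (Q * Ω * Q)).trace = ((A * Q * Ω) * Q).trace := by
            rw [show A * (Q * Ω * Q) = (A * Q * Ω) * Q by noncomm_ring]
        _ = (Q * (A * Q * Ω)).trace := Matrix.trace_mul_comm _ _
        _ = ((Q * A * Q) * Ω).trace := by
            rw [show Q * (A * Q * Ω) = (Q * A * Q) * Ω by noncomm_ring]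
        _ = 0 := by rw [hQAQ, Matrix.zero_mul, Matrix.trace_zero]
    have htrAA : (A * A).trace = 0 := by
      have h1 : A * A = A * Ω - A * (Q * Ω * Q) := by rw [hA]; noncomm_ring
      rw [h1, Matrix.trace_sub, htrA, htrAQ, sub_zero]
    have hA0 : A = 0 := trace_sq_zero' hAsymm htrAA
    have hΩQΩ : Ω = Q * Ω * Q := by rwa [hA, sub_eq_zero] at hA0
    calc Ω * S = (Q * Ω * Q) * S := by rw [← hΩQΩ]
      _ = Q * Ω * (Q * S) := by noncomm_ring
      _ = 0 := by rw [hQS, Matrix.mul_zero]
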